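/- Let G be a connected simple bipartite graph with bipartition (U,V), |U| = p, |V| = q, and degree sequences d_1 ≥ ... ≥ d_p on U and d'_1 ≥ ... ≥ d'_q on V, and let 1 ≤ s ≤ p, 1 ≤ t ≤ q. If there exist nonnegative integers s' < s and t' < t and a biregular bipartite graph H with bipartition orders p − s' and q − t' such that G is the bipartite sum K_{s',t'} + H, then ρ(G) = φ_{s,t}. -/

import Mathlib

noncomputable def specRad {V : Type*} [Fintype V] (G : SimpleGraph V) : ℝ :=
  letI := Classical.decEq V
  letI := Classical.decRel G.Adj
  sSup (spectrum ℝ (G.adjMatrix ℝ))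

open Matrix in
lemma mem_spec_of_eig {n : Type*} [Fintype n] [DecidableEq n] (M : Matrix n n ℝ) (μ : ℝ)
    (v : n → ℝ) (hv : v ≠ 0) (h : M.mulVec v = μ • v) : μ ∈ spectrum ℝ M := by
  rw [spectrum.mem_iff]
  intro hunit
  rw [Matrix.isUnit_iff_isUnit_det, isUnit_iff_ne_zero] at hunit
  apply hunit
  rw [← Matrix.exists_mulVec_eq_zero_iff]
  refine ⟨v, hv, ?_⟩
  have : (algebraMap ℝ (Matrix n n ℝ) μ) = μ • (1 : Matrix n n ℝ) := by
    simp [Algebra.algebraMap_eq_smul_one]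
  rw [this, Matrix.sub_mulVec, Matrix.smul_mulVec, Matrix.one_mulVec, h, sub_self]

open Matrix in
lemma eig_of_mem_spec {n : Type*} [Fintype n] [DecidableEq n] (M : Matrix n n ℝ) (μ : ℝ)
    (h : μ ∈ spectrum ℝ M) : ∃ v : n → ℝ, v ≠ 0 ∧ M.mulVec v = μ • v := by
  rw [spectrum.mem_iff, Matrix.isUnit_iff_isUnit_det, isUnit_iff_ne_zero, not_not] at h
  rw [← Matrix.exists_mulVec_eq_zero_iff] at h
  obtain ⟨v, hv, hvz⟩ := h
  refine ⟨v, hv, ?_⟩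
  have : (algebraMap ℝ (Matrix n n ℝ) μ) = μ • (1 : Matrix n n ℝ) := by
    simp [Algebra.algebraMap_eq_smul_one]
  rw [this, Matrix.sub_mulVec, Matrix.smul_mulVec, Matrix.one_mulVec] at hvz
  exact (sub_eq_zero.mp hvz).symm

open Matrix in
lemma symm_pair {n : Type*} [Fintype n] (M : Matrix n n ℝ) (hs : ∀ i j, M i j = M j i)
    (u x : n → ℝ) : (M.mulVec u) ⬝ᵥ x = u ⬝ᵥ (M.mulVec x) := by
  simp only [dotProduct, Matrix.mulVec, dotProduct, Finset.sum_mul,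
    Finset.mul_sum]
  rw [Finset.sum_comm]
  apply Finset.sum_congr rfl; intro i _
  apply Finset.sum_congr rfl; intro j _
  rw [hs i j]; ring

lemma adjMatrix_indep {V : Type*} [Fintype V] (G : SimpleGraph V)
    (h1 h2 : DecidableRel G.Adj) :
    @SimpleGraph.adjMatrix ℝ V G h1 _ _ = @SimpleGraph.adjMatrix ℝ V G h2 _ _ := by
  ext v w
  by_cases h : G.Adj v w <;> simp [SimpleGraph.adjMatrix, h]

lemma specRad_eq_sSup {V : Type*} [Fintype V] [DecidableEq V] (G : SimpleGraph V)
    [DecidableRel G.Adj] :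
    specRad G = sSup (spectrum ℝ (G.adjMatrix ℝ)) := by
  unfold specRad
  congr!

set_option maxHeartbeats 2000000 in
/-- If a connected bipartite graph `G` (vertices ordered by nonincreasing degrees on each side)
is the bipartite sum `K_{s',t'} + H` of a complete bipartite graph `K_{s',t'}` (the first `s'`
left and first `t'` right vertices, joined to everything on the other side) and a biregular
bipartite graph `H` (the induced graph on the remaining `p - s'` left and `q - t'` right
vertices, having constant degrees on each side), with `s' < s` and `t' < t` (here `s`, `t` are
0-based indices, so the paper's 1-based conditions `s' < s`, `t' < t` read `s' ≤ s`, `t' ≤ t`),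
then `ρ(G) = φ_{s,t}`. -/
theorem stmt3 (p q : ℕ) (G : SimpleGraph (Fin p ⊕ Fin q)) [DecidableRel G.Adj]
    (hconn : G.Connected)
    (hL : ∀ i j : Fin p, ¬ G.Adj (Sum.inl i) (Sum.inl j))
    (hR : ∀ i j : Fin q, ¬ G.Adj (Sum.inr i) (Sum.inr j))
    (hdU : ∀ i j : Fin p, i ≤ j → G.degree (Sum.inl j) ≤ G.degree (Sum.inl i))
    (hdV : ∀ i j : Fin q, i ≤ j → G.degree (Sum.inr j) ≤ G.degree (Sum.inr i))
    (s : Fin p) (t : Fin q) (X Y : ℝ)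
    (hX : X = (G.degree (Sum.inl s) : ℝ) * (G.degree (Sum.inr t) : ℝ)
      + ∑ i ∈ Finset.univ.filter (fun i : Fin p => i < s),
          ((G.degree (Sum.inl i) : ℝ) - (G.degree (Sum.inl s) : ℝ))
      + ∑ j ∈ Finset.univ.filter (fun j : Fin q => j < t),
          ((G.degree (Sum.inr j) : ℝ) - (G.degree (Sum.inr t) : ℝ)))
    (hY : Y = (∑ i ∈ Finset.univ.filter (fun i : Fin p => i < s),
          ((G.degree (Sum.inl i) : ℝ) - (G.degree (Sum.inl s) : ℝ)))
      * (∑ j ∈ Finset.univ.filter (fun j : Fin q => j < t),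
          ((G.degree (Sum.inr j) : ℝ) - (G.degree (Sum.inr t) : ℝ))))
    (s' t' : ℕ) (hs' : s' ≤ s.val) (ht' : t' ≤ t.val)
    (hfull : ∀ (i : Fin p) (j : Fin q), i.val < s' ∨ j.val < t' →
      G.Adj (Sum.inl i) (Sum.inr j))
    (hbiregL : ∀ i i' : Fin p, s' ≤ i.val → s' ≤ i'.val →
      G.degree (Sum.inl i) = G.degree (Sum.inl i'))
    (hbiregR : ∀ j j' : Fin q, t' ≤ j.val → t' ≤ j'.val →
      G.degree (Sum.inr j) = G.degree (Sum.inr j')) :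
    specRad G = Real.sqrt ((X + Real.sqrt (X^2 - 4*Y)) / 2) := by
  have hp0 : 0 < p := lt_of_le_of_lt (Nat.zero_le _) s.isLt
  have hq0 : 0 < q := lt_of_le_of_lt (Nat.zero_le _) t.isLt
  have hs'p : s' < p := lt_of_le_of_lt hs' s.isLt
  have ht'q : t' < q := lt_of_le_of_lt ht' t.isLt
  -- counting over the sum type
  have cardSum : ∀ (Pred : Fin p ⊕ Fin q → Prop) (_ : DecidablePred Pred),
      (Finset.univ.filter Pred).card
        = (Finset.univ.filter (fun i : Fin p => Pred (Sum.inl i))).card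
          + (Finset.univ.filter (fun j : Fin q => Pred (Sum.inr j))).card := by
    intro Pred _
    rw [Finset.card_filter, Finset.card_filter, Finset.card_filter, Fintype.sum_sum_type]
  -- degree of a left vertex counts right neighbors
  have degL : ∀ i : Fin p, G.degree (Sum.inl i)
      = (Finset.univ.filter (fun j : Fin q => G.Adj (Sum.inl i) (Sum.inr j))).card := by
    intro i
    rw [← SimpleGraph.card_neighborFinset_eq_degree, SimpleGraph.neighborFinset_eq_filter,
      Finset.card_filter, Fintype.sum_sum_type, Finset.card_filter]
    simp [hL i]
  have degR : ∀ j : Fin q, G.degree (Sum.inr j)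
      = (Finset.univ.filter (fun i : Fin p => G.Adj (Sum.inl i) (Sum.inr j))).card := by
    intro j
    rw [← SimpleGraph.card_neighborFinset_eq_degree, SimpleGraph.neighborFinset_eq_filter,
      Finset.card_filter, Fintype.sum_sum_type, Finset.card_filter]
    have h2 : ∀ i : Fin p, G.Adj (Sum.inr j) (Sum.inl i) ↔ G.Adj (Sum.inl i) (Sum.inr j) :=
      fun i => G.adj_comm _ _
    simp [hR j, h2]
  -- cardinalities of initial segments
  have cardlt_q : (Finset.univ.filter (fun j : Fin q => j.val < t')).card = t' := by
    have he : Finset.univ.filter (fun j : Fin q => j.val < t')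
        = Finset.attachFin (Finset.range t')
          (fun m hm => lt_of_lt_of_le (Finset.mem_range.mp hm) ht'q.le) := by
      ext j; simp [Finset.mem_attachFin]
    rw [he, Finset.card_attachFin, Finset.card_range]
  have cardlt_p : (Finset.univ.filter (fun i : Fin p => i.val < s')).card = s' := by
    have he : Finset.univ.filter (fun i : Fin p => i.val < s')
        = Finset.attachFin (Finset.range s')
          (fun m hm => lt_of_lt_of_le (Finset.mem_range.mp hm) hs'p.le) := by
      ext i; simp [Finset.mem_attachFin]
    rw [he, Finset.card_attachFin, Finset.card_range]
  -- row counts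
  have n1L : ∀ i : Fin p,
      (Finset.univ.filter (fun j : Fin q => G.Adj (Sum.inl i) (Sum.inr j) ∧ j.val < t')).card
        = t' := by
    intro i
    have hset : Finset.univ.filter (fun j : Fin q => G.Adj (Sum.inl i) (Sum.inr j) ∧ j.val < t')
        = Finset.univ.filter (fun j : Fin q => j.val < t') := by
      ext j
      simp only [Finset.mem_filter, Finset.mem_univ, true_and]
      exact ⟨fun h => h.2, fun h => ⟨hfull i j (Or.inr h), h⟩⟩
    rw [hset, cardlt_q]
  have n2L : ∀ i : Fin p,
      t' + (Finset.univ.filter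
          (fun j : Fin q => G.Adj (Sum.inl i) (Sum.inr j) ∧ ¬ j.val < t')).card
        = G.degree (Sum.inl i) := by
    intro i
    have := Finset.card_filter_add_card_filter_not
      (s := Finset.univ.filter (fun j : Fin q => G.Adj (Sum.inl i) (Sum.inr j)))
      (p := fun j => j.val < t')
    rw [Finset.filter_filter, Finset.filter_filter] at this
    rw [degL i, ← this, n1L i]
  have n1R : ∀ j : Fin q,
      (Finset.univ.filter (fun i : Fin p => G.Adj (Sum.inl i) (Sum.inr j) ∧ i.val < s')).card
        = s' := by
    intro j
    have hset : Finset.univ.filter (fun i : Fin p => G.Adj (Sum.inl i) (Sum.inr j) ∧ i.val < s')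
        = Finset.univ.filter (fun i : Fin p => i.val < s') := by
      ext i
      simp only [Finset.mem_filter, Finset.mem_univ, true_and]
      exact ⟨fun h => h.2, fun h => ⟨hfull i j (Or.inl h), h⟩⟩
    rw [hset, cardlt_p]
  have n2R : ∀ j : Fin q,
      s' + (Finset.univ.filter
          (fun i : Fin p => G.Adj (Sum.inl i) (Sum.inr j) ∧ ¬ i.val < s')).card
        = G.degree (Sum.inr j) := by
    intro j
    have := Finset.card_filter_add_card_filter_not
      (s := Finset.univ.filter (fun i : Fin p => G.Adj (Sum.inl i) (Sum.inr j)))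
      (p := fun i => i.val < s')
    rw [Finset.filter_filter, Finset.filter_filter] at this
    rw [degR j, ← this, n1R j]
  -- degrees of the "full" vertices
  have degL_lt : ∀ i : Fin p, i.val < s' → G.degree (Sum.inl i) = q := by
    intro i hi
    rw [degL i]
    have : Finset.univ.filter (fun j : Fin q => G.Adj (Sum.inl i) (Sum.inr j))
        = Finset.univ := Finset.filter_true_of_mem (fun j _ => hfull i j (Or.inl hi))
    rw [this, Finset.card_univ, Fintype.card_fin]
  have degR_lt : ∀ j : Fin q, j.val < t' → G.degree (Sum.inr j) = p := by
    intro j hj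
    rw [degR j]
    have : Finset.univ.filter (fun i : Fin p => G.Adj (Sum.inl i) (Sum.inr j))
        = Finset.univ := Finset.filter_true_of_mem (fun i _ => hfull i j (Or.inr hj))
    rw [this, Finset.card_univ, Fintype.card_fin]
  have degL_ge : ∀ i : Fin p, s' ≤ i.val → G.degree (Sum.inl i) = G.degree (Sum.inl s) :=
    fun i hi => hbiregL i s hi hs'
  have degR_ge : ∀ j : Fin q, t' ≤ j.val → G.degree (Sum.inr j) = G.degree (Sum.inr t) :=
    fun j hj => hbiregR j t hj ht'
  -- positive degrees from connectivity
  have hDpos : 0 < G.degree (Sum.inl s) := by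
    rw [SimpleGraph.degree_pos_iff_exists_adj]
    obtain ⟨w⟩ := hconn.preconnected (Sum.inl s) (Sum.inr t)
    cases w with
    | cons h _ => exact ⟨_, h⟩
  have hEpos : 0 < G.degree (Sum.inr t) := by
    rw [SimpleGraph.degree_pos_iff_exists_adj]
    obtain ⟨w⟩ := hconn.preconnected (Sum.inr t) (Sum.inl s)
    cases w with
    | cons h _ => exact ⟨_, h⟩
  -- real abbreviations
  set D : ℝ := (G.degree (Sum.inl s) : ℝ) with hD
  set E : ℝ := (G.degree (Sum.inr t) : ℝ) with hE
  have hD1 : (1:ℝ) ≤ D := by rw [hD]; exact_mod_cast hDpos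
  have hE1 : (1:ℝ) ≤ E := by rw [hE]; exact_mod_cast hEpos
  have hDqnat : G.degree (Sum.inl s) ≤ q := by
    rw [degL s]
    exact le_trans (Finset.card_filter_le _ _) (by simp)
  have hEpnat : G.degree (Sum.inr t) ≤ p := by
    rw [degR t]
    exact le_trans (Finset.card_filter_le _ _) (by simp)
  have hDq : D ≤ (q:ℝ) := by rw [hD]; exact_mod_cast hDqnat
  have hEp : E ≤ (p:ℝ) := by rw [hE]; exact_mod_cast hEpnat
  have ht'D : (t':ℝ) ≤ D := by
    rw [hD]
    have := n2L s
    exact_mod_cast (by omega : t' ≤ G.degree (Sum.inl s))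
  have hs'E : (s':ℝ) ≤ E := by
    rw [hE]
    have := n2R t
    exact_mod_cast (by omega : s' ≤ G.degree (Sum.inr t))
  -- the degree sums
  have hS1 : (∑ i ∈ Finset.univ.filter (fun i : Fin p => i < s),
      ((G.degree (Sum.inl i) : ℝ) - D)) = (s':ℝ) * ((q:ℝ) - D) := by
    rw [← Finset.sum_filter_add_sum_filter_not
      (Finset.univ.filter (fun i : Fin p => i < s)) (fun i => i.val < s')]
    have h1 : (Finset.univ.filter (fun i : Fin p => i < s)).filter (fun i => i.val < s')
        = Finset.univ.filter (fun i : Fin p => i.val < s') := by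
      ext i
      simp only [Finset.mem_filter, Finset.mem_univ, true_and]
      refine ⟨fun h => h.2, fun h => ⟨?_, h⟩⟩
      exact Fin.lt_def.mpr (lt_of_lt_of_le h hs')
    have h2 : ∀ i ∈ (Finset.univ.filter (fun i : Fin p => i < s)).filter
        (fun i => ¬ i.val < s'), ((G.degree (Sum.inl i) : ℝ) - D) = 0 := by
      intro i hi
      rw [Finset.mem_filter] at hi
      rw [hD, degL_ge i (not_lt.mp hi.2)]
      ring
    rw [Finset.sum_eq_zero h2, add_zero, h1]
    have hconst : ∀ i ∈ Finset.univ.filter (fun i : Fin p => i.val < s'),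
        ((G.degree (Sum.inl i) : ℝ) - D) = ((q:ℝ) - D) := by
      intro i hi
      rw [Finset.mem_filter] at hi
      rw [degL_lt i hi.2]
    rw [Finset.sum_congr rfl hconst, Finset.sum_const, cardlt_p, nsmul_eq_mul]
  have hS2 : (∑ j ∈ Finset.univ.filter (fun j : Fin q => j < t),
      ((G.degree (Sum.inr j) : ℝ) - E)) = (t':ℝ) * ((p:ℝ) - E) := by
    rw [← Finset.sum_filter_add_sum_filter_not
      (Finset.univ.filter (fun j : Fin q => j < t)) (fun j => j.val < t')]
    have h1 : (Finset.univ.filter (fun j : Fin q => j < t)).filter (fun j => j.val < t')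
        = Finset.univ.filter (fun j : Fin q => j.val < t') := by
      ext j
      simp only [Finset.mem_filter, Finset.mem_univ, true_and]
      refine ⟨fun h => h.2, fun h => ⟨?_, h⟩⟩
      exact Fin.lt_def.mpr (lt_of_lt_of_le h ht')
    have h2 : ∀ j ∈ (Finset.univ.filter (fun j : Fin q => j < t)).filter
        (fun j => ¬ j.val < t'), ((G.degree (Sum.inr j) : ℝ) - E) = 0 := by
      intro j hj
      rw [Finset.mem_filter] at hj
      rw [hE, degR_ge j (not_lt.mp hj.2)]
      ring
    rw [Finset.sum_eq_zero h2, add_zero, h1]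
    have hconst : ∀ j ∈ Finset.univ.filter (fun j : Fin q => j.val < t'),
        ((G.degree (Sum.inr j) : ℝ) - E) = ((p:ℝ) - E) := by
      intro j hj
      rw [Finset.mem_filter] at hj
      rw [degR_lt j hj.2]
    rw [Finset.sum_congr rfl hconst, Finset.sum_const, cardlt_q, nsmul_eq_mul]
  have hXr : X = D*E + (s':ℝ)*((q:ℝ)-D) + (t':ℝ)*((p:ℝ)-E) := by
    rw [hX, hS1, hS2, hD, hE]
  have hYr : Y = ((s':ℝ)*((q:ℝ)-D)) * ((t':ℝ)*((p:ℝ)-E)) := by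
    rw [hY, hS1, hS2]
  -- quadratic / quotient-matrix data
  set R : ℝ := Real.sqrt (X^2 - 4*Y) with hRdef
  set θ : ℝ := (X + R)/2 with hθdef
  set al : ℝ := (t':ℝ) * (p:ℝ) with hal
  set be : ℝ := (s':ℝ)*((q:ℝ)-(t':ℝ)) + ((p:ℝ)-(s':ℝ))*(D-(t':ℝ)) with hbe
  set ga : ℝ := (t':ℝ) * E with hga
  set de : ℝ := (s':ℝ)*((q:ℝ)-(t':ℝ)) + (D-(t':ℝ))*(E-(s':ℝ)) with hde
  have hXad : X = al + de := by rw [hXr, hal, hde]; ring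
  have hYad : Y = al*de - be*ga := by rw [hYr, hal, hbe, hga, hde]; ring
  have hdisc : X^2 - 4*Y = (al - de)^2 + 4*(be*ga) := by rw [hXad, hYad]; ring
  have hs'0 : (0:ℝ) ≤ (s':ℝ) := Nat.cast_nonneg _
  have ht'0 : (0:ℝ) ≤ (t':ℝ) := Nat.cast_nonneg _
  have hqt' : (1:ℝ) ≤ (q:ℝ) - (t':ℝ) := by
    have : (t':ℝ) + 1 ≤ (q:ℝ) := by exact_mod_cast ht'q
    linarith
  have hps' : (0:ℝ) ≤ (p:ℝ) - (s':ℝ) := by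
    have : (s':ℝ) + 1 ≤ (p:ℝ) := by exact_mod_cast hs'p
    linarith
  have hbe0 : 0 ≤ be := by
    rw [hbe]
    have h4 : (0:ℝ) ≤ D - (t':ℝ) := by linarith
    exact add_nonneg (mul_nonneg hs'0 (by linarith)) (mul_nonneg hps' h4)
  have hga0 : 0 ≤ ga := by
    rw [hga]
    exact mul_nonneg ht'0 (by linarith)
  have hdisc0 : (0:ℝ) ≤ X^2 - 4*Y := by
    rw [hdisc]
    linarith only [sq_nonneg (al - de), mul_nonneg hbe0 hga0]
  have hR2 : R^2 = X^2 - 4*Y := by rw [hRdef]; exact Real.sq_sqrt hdisc0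
  have hR0 : (0:ℝ) ≤ R := by rw [hRdef]; exact Real.sqrt_nonneg _
  have hroot : θ^2 = X*θ - Y := by rw [hθdef]; linear_combination hR2 / 4
  have hX1 : (1:ℝ) ≤ X := by
    rw [hXr]
    have hDE : (1:ℝ)*1 ≤ D*E := mul_le_mul hD1 hE1 (by norm_num) (by linarith only [hD1])
    linarith only [hDE, mul_nonneg hs'0 (by linarith only [hDq] : (0:ℝ) ≤ (q:ℝ) - D),
      mul_nonneg ht'0 (by linarith only [hEp] : (0:ℝ) ≤ (p:ℝ) - E)]
  have hθpos : (0:ℝ) < θ := by rw [hθdef]; linarith only [hR0, hX1]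
  -- positivity of be
  have hbepos : 0 < be := by
    rcases Nat.eq_zero_or_pos s' with h0 | hpos
    · -- s' = 0 : show D - t' ≥ 1 via a neighbour of (inr t)
      obtain ⟨v, hv⟩ := (G.degree_pos_iff_exists_adj (Sum.inr t)).mp hEpos
      have hadj : ∃ i : Fin p, G.Adj (Sum.inl i) (Sum.inr t) := by
        cases v with
        | inl i => exact ⟨i, hv.symm⟩
        | inr j => exact absurd hv (hR t j)
      obtain ⟨i, hadj⟩ := hadj
      have hmem : t ∈ Finset.univ.filter
          (fun j : Fin q => G.Adj (Sum.inl i) (Sum.inr j) ∧ ¬ j.val < t') := by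
        simp only [Finset.mem_filter, Finset.mem_univ, true_and]
        exact ⟨hadj, not_lt.mpr ht'⟩
      have hcard := Finset.card_pos.mpr ⟨t, hmem⟩
      have h2 := n2L i
      have hdi : G.degree (Sum.inl i) = G.degree (Sum.inl s) := degL_ge i (by omega)
      have hDt : (t':ℝ) + 1 ≤ D := by
        rw [hD]
        exact_mod_cast (by omega : t' + 1 ≤ G.degree (Sum.inl s))
      have hp1 : (1:ℝ) ≤ (p:ℝ) := by exact_mod_cast hp0
      have hs'r : (s':ℝ) = 0 := by rw [h0]; norm_num
      rw [hbe, hs'r]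
      have he : (0:ℝ)*((q:ℝ)-(t':ℝ)) + ((p:ℝ)-0)*(D-(t':ℝ)) = (p:ℝ)*(D-(t':ℝ)) := by ring
      rw [he]
      exact mul_pos (by exact_mod_cast hp0) (by linarith only [hDt])
    · have h1 : (1:ℝ) ≤ (s':ℝ) := by exact_mod_cast hpos
      have h4 : (0:ℝ) ≤ D - (t':ℝ) := by linarith only [ht'D]
      rw [hbe]
      have t1 : 0 < (s':ℝ)*((q:ℝ)-(t':ℝ)) :=
        mul_pos (by linarith only [h1]) (by linarith only [hqt'])
      linarith only [t1, mul_nonneg hps' h4]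
  have hθal : al < θ := by
    by_cases hga' : ga = 0
    · have ht'z : (t':ℝ) = 0 := by
        rcases mul_eq_zero.mp (hga ▸ hga' : (t':ℝ) * E = 0) with h | h
        · exact h
        · exfalso; linarith
      have : al = 0 := by rw [hal, ht'z]; ring
      rw [this]; exact hθpos
    · have hgapos : 0 < ga := lt_of_le_of_ne hga0 (Ne.symm hga')
      have hlt : (al - de)^2 < X^2 - 4*Y := by
        rw [hdisc]
        linarith only [mul_pos hbepos hgapos]
      have h2 : |al - de| < R := by
        rw [← Real.sqrt_sq_eq_abs, hRdef]
        exact Real.sqrt_lt_sqrt (sq_nonneg _) hlt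
      have h3 : al - de < R := lt_of_le_of_lt (le_abs_self _) h2
      rw [hθdef, hXad]
      linarith
  -- the eigenvector data
  set dd : ℝ := θ - al with hdd
  have hddpos : 0 < dd := by rw [hdd]; linarith
  set φ : ℝ := Real.sqrt θ with hφdef
  have hφpos : 0 < φ := by rw [hφdef]; exact Real.sqrt_pos.mpr hθpos
  have hφne : φ ≠ 0 := ne_of_gt hφpos
  have hφ2 : φ^2 = θ := by rw [hφdef]; exact Real.sq_sqrt hθpos.le
  set aa : ℝ := ((t':ℝ)*be + ((q:ℝ)-(t':ℝ))*dd)/φ with haa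
  set bb : ℝ := ((t':ℝ)*be + (D-(t':ℝ))*dd)/φ with hbb
  have haapos : 0 < aa := by
    rw [haa]
    apply div_pos _ hφpos
    have t2 : 0 < ((q:ℝ)-(t':ℝ))*dd := mul_pos (by linarith only [hqt']) hddpos
    linarith only [t2, mul_nonneg ht'0 hbepos.le]
  have hbbpos : 0 < bb := by
    rw [hbb]
    apply div_pos _ hφpos
    rcases Nat.eq_zero_or_pos t' with h0 | hpos
    · have ht'z : (t':ℝ) = 0 := by rw [h0]; norm_num
      rw [ht'z]
      have he : (0:ℝ)*be + (D-0)*dd = D*dd := by ring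
      rw [he]
      exact mul_pos (by linarith only [hD1]) hddpos
    · have h1 : (1:ℝ) ≤ (t':ℝ) := by exact_mod_cast hpos
      have t1 : 0 < (t':ℝ)*be := mul_pos (by linarith only [h1]) hbepos
      linarith only [t1,
        mul_nonneg (by linarith only [ht'D] : (0:ℝ) ≤ D - (t':ℝ)) hddpos.le]
  set x : (Fin p ⊕ Fin q) → ℝ := Sum.elim
    (fun i : Fin p => if i.val < s' then aa else bb)
    (fun j : Fin q => if j.val < t' then be else dd) with hx
  have hxpos : ∀ v, 0 < x v := by
    intro v
    cases v with
    | inl i =>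
      rw [hx]
      dsimp only [Sum.elim_inl]
      split
      · exact haapos
      · exact hbbpos
    | inr j =>
      rw [hx]
      dsimp only [Sum.elim_inr]
      split
      · exact hbepos
      · exact hddpos
  have hxne : x ≠ 0 :=
    fun h => absurd (congrFun h (Sum.inr t)) (ne_of_gt (hxpos _))
  -- mulVec computation on the left vertices
  have mulVecL : ∀ i : Fin p, ((G.adjMatrix ℝ).mulVec x) (Sum.inl i)
      = be * (t':ℝ) + dd * ((G.degree (Sum.inl i):ℝ) - (t':ℝ)) := by
    intro i
    rw [SimpleGraph.adjMatrix_mulVec_apply, SimpleGraph.neighborFinset_eq_filter,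
      Finset.sum_filter, Fintype.sum_sum_type]
    have hz : (∑ k : Fin p, if G.Adj (Sum.inl i) (Sum.inl k) then x (Sum.inl k) else 0) = 0 :=
      Finset.sum_eq_zero (fun k _ => if_neg (hL i k))
    rw [hz, zero_add, ← Finset.sum_filter]
    have hsummand : ∀ j ∈ Finset.univ.filter (fun j : Fin q => G.Adj (Sum.inl i) (Sum.inr j)),
        x (Sum.inr j) = (if j.val < t' then be else dd) := by
      intro j _
      rw [hx, Sum.elim_inr]
    rw [Finset.sum_congr rfl hsummand]
    rw [Finset.sum_ite, Finset.sum_const, Finset.sum_const,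
      Finset.filter_filter, Finset.filter_filter, nsmul_eq_mul, nsmul_eq_mul]
    rw [n1L i]
    have h3 : (t':ℝ) + ((Finset.univ.filter
        (fun j : Fin q => G.Adj (Sum.inl i) (Sum.inr j) ∧ ¬ j.val < t')).card : ℝ)
        = (G.degree (Sum.inl i):ℝ) := by exact_mod_cast n2L i
    have h4 : ((Finset.univ.filter
        (fun j : Fin q => G.Adj (Sum.inl i) (Sum.inr j) ∧ ¬ j.val < t')).card : ℝ)
        = (G.degree (Sum.inl i):ℝ) - (t':ℝ) := by linarith
    rw [h4]
    ring
  have mulVecR : ∀ j : Fin q, ((G.adjMatrix ℝ).mulVec x) (Sum.inr j)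
      = aa * (s':ℝ) + bb * ((G.degree (Sum.inr j):ℝ) - (s':ℝ)) := by
    intro j
    rw [SimpleGraph.adjMatrix_mulVec_apply, SimpleGraph.neighborFinset_eq_filter,
      Finset.sum_filter, Fintype.sum_sum_type]
    have hz : (∑ k : Fin q, if G.Adj (Sum.inr j) (Sum.inr k) then x (Sum.inr k) else 0) = 0 :=
      Finset.sum_eq_zero (fun k _ => if_neg (hR j k))
    rw [hz, add_zero, ← Finset.sum_filter]
    have hsetR : Finset.univ.filter (fun i : Fin p => G.Adj (Sum.inr j) (Sum.inl i))
        = Finset.univ.filter (fun i : Fin p => G.Adj (Sum.inl i) (Sum.inr j)) := by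
      ext i
      simp only [Finset.mem_filter, Finset.mem_univ, true_and]
      exact ⟨fun h => h.symm, fun h => h.symm⟩
    rw [hsetR]
    have hsummand : ∀ i ∈ Finset.univ.filter (fun i : Fin p => G.Adj (Sum.inl i) (Sum.inr j)),
        x (Sum.inl i) = (if i.val < s' then aa else bb) := by
      intro i _
      rw [hx, Sum.elim_inl]
    rw [Finset.sum_congr rfl hsummand]
    rw [Finset.sum_ite, Finset.sum_const, Finset.sum_const,
      Finset.filter_filter, Finset.filter_filter, nsmul_eq_mul, nsmul_eq_mul]
    rw [n1R j]
    have h3 : (s':ℝ) + ((Finset.univ.filter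
        (fun i : Fin p => G.Adj (Sum.inl i) (Sum.inr j) ∧ ¬ i.val < s')).card : ℝ)
        = (G.degree (Sum.inr j):ℝ) := by exact_mod_cast n2R j
    have h4 : ((Finset.univ.filter
        (fun i : Fin p => G.Adj (Sum.inl i) (Sum.inr j) ∧ ¬ i.val < s')).card : ℝ)
        = (G.degree (Sum.inr j):ℝ) - (s':ℝ) := by linarith
    rw [h4]
    ring
  -- the eigenvector equation
  have e2 : φ * aa = (t':ℝ)*be + ((q:ℝ)-(t':ℝ))*dd := by
    rw [haa]; field_simp
  have e3 : φ * bb = (t':ℝ)*be + (D-(t':ℝ))*dd := by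
    rw [hbb]; field_simp
  have hAx : (G.adjMatrix ℝ).mulVec x = φ • x := by
    funext v
    cases v with
    | inl i =>
      rw [mulVecL i, Pi.smul_apply, smul_eq_mul]
      by_cases hi : i.val < s'
      · rw [degL_lt i hi]
        have hxv : x (Sum.inl i) = aa := by rw [hx]; simp [hi]
        rw [hxv]
        have : φ * aa = (t':ℝ)*be + ((q:ℝ)-(t':ℝ))*dd := e2
        linarith [this]
      · rw [degL_ge i (not_lt.mp hi), ← hD]
        have hxv : x (Sum.inl i) = bb := by rw [hx]; simp [hi]
        rw [hxv]
        linarith [e3]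
    | inr j =>
      rw [mulVecR j, Pi.smul_apply, smul_eq_mul]
      by_cases hj : j.val < t'
      · rw [degR_lt j hj]
        have hxv : x (Sum.inr j) = be := by rw [hx]; simp [hj]
        rw [hxv]
        apply mul_left_cancel₀ hφne
        have e1 : φ * (aa * (s':ℝ) + bb * ((p:ℝ) - (s':ℝ)))
            = (s':ℝ)*(φ*aa) + ((p:ℝ)-(s':ℝ))*(φ*bb) := by ring
        rw [e1, e2, e3]
        have e4 : φ * (φ * be) = θ * be := by rw [← hφ2]; ring
        rw [e4, hdd, hbe, hal]
        ring
      · rw [degR_ge j (not_lt.mp hj), ← hE]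
        have hxv : x (Sum.inr j) = dd := by rw [hx]; simp [hj]
        rw [hxv]
        apply mul_left_cancel₀ hφne
        have e1 : φ * (aa * (s':ℝ) + bb * (E - (s':ℝ)))
            = (s':ℝ)*(φ*aa) + (E-(s':ℝ))*(φ*bb) := by ring
        rw [e1, e2, e3]
        have e4 : φ * (φ * dd) = θ * dd := by rw [← hφ2]; ring
        rw [e4]
        have hroot2 : θ^2 = (al + de)*θ - (al*de - be*ga) := by
          rw [← hXad, ← hYad]; exact hroot
        rw [hal, hde, hbe, hga] at hroot2
        rw [hdd, hbe, hal]
        linear_combination -hroot2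
  have hφmem : φ ∈ spectrum ℝ (G.adjMatrix ℝ) := mem_spec_of_eig _ φ x hxne hAx
  -- upper bound
  have hbound : ∀ μ ∈ spectrum ℝ (G.adjMatrix ℝ), μ ≤ φ := by
    intro μ hμ
    obtain ⟨w, hw0, hwe⟩ := eig_of_mem_spec _ μ hμ
    set u : (Fin p ⊕ Fin q) → ℝ := fun v => |w v| with hu
    have hAnn : ∀ v k, (0:ℝ) ≤ G.adjMatrix ℝ v k := by
      intro v k
      rw [SimpleGraph.adjMatrix_apply]
      split <;> norm_num
    have hsymm : ∀ v k, G.adjMatrix ℝ v k = G.adjMatrix ℝ k v := by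
      intro v k
      rw [SimpleGraph.adjMatrix_apply, SimpleGraph.adjMatrix_apply]
      by_cases h : G.Adj v k
      · rw [if_pos h, if_pos h.symm]
      · rw [if_neg h, if_neg (fun hc => h hc.symm)]
    have h1 : ∀ v, |μ| * u v ≤ ((G.adjMatrix ℝ).mulVec u) v := by
      intro v
      have hv1 : ((G.adjMatrix ℝ).mulVec w) v = μ * w v := by rw [hwe]; simp
      have habs : |μ| * u v = |((G.adjMatrix ℝ).mulVec w) v| := by
        rw [hv1, abs_mul, hu]
      rw [habs]
      simp only [Matrix.mulVec, dotProduct]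
      refine (Finset.abs_sum_le_sum_abs _ _).trans ?_
      apply Finset.sum_le_sum
      intro k _
      rw [abs_mul, abs_of_nonneg (hAnn v k), hu]
    have key : |μ| * dotProduct u x ≤ φ * dotProduct u x := by
      have l1 : |μ| * dotProduct u x = ∑ v, (|μ| * u v) * x v := by
        rw [dotProduct, Finset.mul_sum]
        apply Finset.sum_congr rfl; intros; ring
      have l2 : (∑ v, (|μ| * u v) * x v)
          ≤ ∑ v, (((G.adjMatrix ℝ).mulVec u) v) * x v := by
        apply Finset.sum_le_sum
        intro v _
        exact mul_le_mul_of_nonneg_right (h1 v) (hxpos v).le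
      have l4 : dotProduct ((G.adjMatrix ℝ).mulVec u) x
          = dotProduct u ((G.adjMatrix ℝ).mulVec x) := symm_pair _ hsymm u x
      have l5 : dotProduct u ((G.adjMatrix ℝ).mulVec x)
          = φ * dotProduct u x := by
        rw [hAx, dotProduct_smul, smul_eq_mul]
      rw [l1]
      calc (∑ v, (|μ| * u v) * x v)
          ≤ ∑ v, (((G.adjMatrix ℝ).mulVec u) v) * x v := l2
        _ = dotProduct ((G.adjMatrix ℝ).mulVec u) x := rfl
        _ = φ * dotProduct u x := by rw [l4, l5]
    have hdp : 0 < dotProduct u x := by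
      obtain ⟨v0, hv0⟩ := Function.ne_iff.mp hw0
      rw [dotProduct]
      apply Finset.sum_pos'
      · intro v _
        exact mul_nonneg (abs_nonneg _) (hxpos v).le
      · refine ⟨v0, Finset.mem_univ _, ?_⟩
        have : w v0 ≠ 0 := by simpa using hv0
        exact mul_pos (abs_pos.mpr this) (hxpos v0)
    calc μ ≤ |μ| := le_abs_self μ
      _ ≤ φ := le_of_mul_le_mul_right key hdp
  rw [specRad_eq_sSup]
  exact le_antisymm (csSup_le ⟨φ, hφmem⟩ hbound)
    (le_csSup ⟨φ, fun μ hμ => hbound μ hμ⟩ hφmem)
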